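/- Let τ > 0 and a₀, b₀ be real numbers, and let Δ(s) = s + a₀ + b₀ e^{−sτ}. If s₁ and s₂ are real numbers with s₁ > s₂ and Δ(s₁) = Δ(s₂) = 0, then s₁ is a dominant root of Δ: every complex root s of Δ satisfies Re s ≤ s₁. -/

import Mathlib

/-- CRRID property for `n = 1`, `m = 0`: if `s₁ > s₂` are two real roots of
`Δ(s) = s + a₀ + b₀ e^{-sτ}` with `τ > 0`, then `s₁` is dominant: every complex
root `s` of `Δ` satisfies `Re s ≤ s₁`. -/
theorem crrid_dominancy_n1_m0 (τ a₀ b₀ : ℝ) (hτ : 0 < τ) (s₁ s₂ : ℝ)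
    (h12 : s₂ < s₁)
    (h1 : (s₁ : ℂ) + (a₀ : ℂ) + (b₀ : ℂ) * Complex.exp (-(s₁ : ℂ) * τ) = 0)
    (h2 : (s₂ : ℂ) + (a₀ : ℂ) + (b₀ : ℂ) * Complex.exp (-(s₂ : ℂ) * τ) = 0) :
    ∀ s : ℂ, s + (a₀ : ℂ) + (b₀ : ℂ) * Complex.exp (-s * τ) = 0 → s.re ≤ s₁ := by
  -- Extract real equations
  have E1 : s₁ + a₀ + b₀ * Real.exp (-(s₁ * τ)) = 0 := by
    have h := h1
    rw [show -(s₁ : ℂ) * τ = ((-(s₁ * τ) : ℝ) : ℂ) by push_cast; ring,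
      ← Complex.ofReal_exp] at h
    exact_mod_cast h
  have E2 : s₂ + a₀ + b₀ * Real.exp (-(s₂ * τ)) = 0 := by
    have h := h2
    rw [show -(s₂ : ℂ) * τ = ((-(s₂ * τ) : ℝ) : ℂ) by push_cast; ring,
      ← Complex.ofReal_exp] at h
    exact_mod_cast h
  have hτ1 : Real.exp (-(s₁ * τ)) > 0 := Real.exp_pos _
  have hτ2 : Real.exp (-(s₂ * τ)) > 0 := Real.exp_pos _
  have hlt : Real.exp (-(s₁ * τ)) < Real.exp (-(s₂ * τ)) := by
    apply Real.exp_lt_exp.2; nlinarith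
  have hb0 : 0 < b₀ := by nlinarith
  -- key inequality: b₀ * τ * exp(-s₁τ) < 1
  have hexp : Real.exp (-(s₂ * τ)) > Real.exp (-(s₁ * τ)) + (s₁ - s₂) * τ * Real.exp (-(s₁ * τ)) := by
    have h := Real.add_one_lt_exp (x := (s₁ - s₂) * τ) (ne_of_gt (mul_pos (by linarith) hτ))
    have := Real.exp_add (-(s₁ * τ)) ((s₁ - s₂) * τ)
    have heq : -(s₁*τ) + (s₁-s₂)*τ = -(s₂*τ) := by ring
    rw [heq] at this
    nlinarith
  have hkey : b₀ * τ * Real.exp (-(s₁ * τ)) < 1 := by nlinarith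
  intro s hs
  by_contra hx
  push_neg at hx
  set x := s.re with hxdef
  set y := s.im with hydef
  have hex : Real.exp (-(x * τ)) < Real.exp (-(s₁ * τ)) := by
    apply Real.exp_lt_exp.2; nlinarith
  have hexpx : 0 < Real.exp (-(x * τ)) := Real.exp_pos _
  -- real and imaginary parts of root equation
  have hre : (-s * τ).re = -(x * τ) := by simp [Complex.mul_re]; exact Or.inl rfl
  have him : (-s * τ).im = -(y * τ) := by simp [Complex.mul_im]; exact Or.inl rfl
  have hRe : x + a₀ + b₀ * (Real.exp (-(x * τ)) * Real.cos (-(y * τ))) = 0 := by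
    have := congrArg Complex.re hs
    simpa [Complex.add_re, Complex.mul_re, Complex.exp_re, Complex.exp_im, hre, him] using this
  have hIm : y + b₀ * (Real.exp (-(x * τ)) * Real.sin (-(y * τ))) = 0 := by
    have := congrArg Complex.im hs
    simpa [Complex.add_im, Complex.mul_im, Complex.exp_re, Complex.exp_im, hre, him] using this
  rcases eq_or_ne y 0 with hy | hy
  · -- real root bigger than s₁: contradiction via convexity
    rw [hy] at hRe
    simp at hRe
    -- hRe : x + a₀ + b₀ * exp(-(xτ)) = 0
    have hexx : Real.exp (-(s₁ * τ)) < Real.exp (-(x * τ)) + (x - s₁) * τ * Real.exp (-(s₁ * τ)) := by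
      have h := Real.add_one_lt_exp (x := -((x - s₁) * τ)) (ne_of_lt (by nlinarith))
      have := Real.exp_add (-(s₁ * τ)) (-((x - s₁) * τ))
      have heq : -(s₁*τ) + -((x-s₁)*τ) = -(x*τ) := by ring
      rw [heq] at this
      nlinarith
    nlinarith
  · -- nonreal root
    have hsin : |Real.sin (-(y * τ))| ≤ |(-(y * τ))| := Real.abs_sin_le_abs
    have h1' : |y| = b₀ * (Real.exp (-(x * τ)) * |Real.sin (-(y * τ))|) := by
      have hy' : |y| = |b₀ * (Real.exp (-(x * τ)) * Real.sin (-(y * τ)))| := by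
        rw [abs_eq_abs]; right; linarith
      rw [hy', abs_mul, abs_mul, abs_of_pos hb0, abs_of_pos hexpx]
    have hyabs : 0 < |y| := abs_pos.2 hy
    have hley : |y| ≤ b₀ * (Real.exp (-(x * τ)) * (|y| * τ)) := by
      have habs : |(-(y * τ))| = |y| * τ := by
        rw [abs_neg, abs_mul, abs_of_pos hτ]
      rw [habs] at hsin
      nlinarith [h1', mul_le_mul_of_nonneg_left hsin (le_of_lt (mul_pos hb0 hexpx))]
    have hge : 1 ≤ b₀ * τ * Real.exp (-(x * τ)) := by
      by_contra hc
      push_neg at hc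
      nlinarith
    nlinarith [mul_lt_mul_of_pos_left hex (mul_pos hb0 hτ)]
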